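/- For the geometric size function w(i) = q^i with 0 < q < 1, the expected number of inversions D_n among items {1,...,n} in the size-biased order satisfies E[D_n] = ∑_{k=1}^{n-1} (n-k)/(1+q^{-k}), and E[D_n]/n → c_q = ∑_{k=1}^∞ 1/(1+q^{-k}) as n → ∞, where the series defining c_q converges. -/

import Mathlib

open Filter

/-- Expected number of inversions among items `{1,…,n}` for the geometric
size function `w(i) = q^i`: the sum of `q^j/(q^j+q^i)` over `1 ≤ i < j ≤ n`. -/
noncomputable def expInv (q : ℝ) (n : ℕ) : ℝ :=
  ∑ j ∈ Finset.Icc 1 n, ∑ i ∈ Finset.Ico 1 j, q ^ j / (q ^ j + q ^ i)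

theorem geometric_inversions (q : ℝ) (hq0 : 0 < q) (hq1 : q < 1) :
    (∀ n : ℕ, expInv q n =
        ∑ k ∈ Finset.Icc 1 (n - 1), ((n : ℝ) - k) / (1 + q ^ (-(k : ℤ)))) ∧
      (Summable fun k : ℕ => 1 / (1 + q ^ (-(k + 1 : ℤ)))) ∧
      Tendsto (fun n : ℕ => expInv q n / n) atTop
        (nhds (∑' k : ℕ, 1 / (1 + q ^ (-(k + 1 : ℤ))))) := by
  have hqk : ∀ k : ℕ, (0:ℝ) < q ^ k := fun k => pow_pos hq0 k
  set g : ℕ → ℝ := fun k => q ^ k / (q ^ k + 1) with hg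
  have hden : ∀ k : ℕ, (0:ℝ) < q ^ k + 1 := fun k => by positivity
  -- the statement's summand equals `g k`
  have hfg : ∀ k : ℕ, (1 : ℝ)/(1 + q ^ (-(k:ℤ))) = g k := by
    intro k
    have h1 : q ^ (-(k:ℤ)) = (q ^ k)⁻¹ := by rw [zpow_neg, zpow_natCast]
    rw [h1, hg]
    rw [eq_div_iff (ne_of_gt (hden k))]
    field_simp
  -- inner sum rewrite
  have inner : ∀ j : ℕ, (∑ i ∈ Finset.Ico 1 j, q ^ j / (q ^ j + q ^ i))
      = ∑ k ∈ Finset.Ico 1 j, g k := by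
    intro j
    refine Finset.sum_nbij' (fun i => j - i) (fun k => j - k) ?_ ?_ ?_ ?_ ?_
    · intro i hi
      simp only [Finset.mem_Ico] at *
      omega
    · intro k hk
      simp only [Finset.mem_Ico] at *
      omega
    · intro i hi
      simp only [Finset.mem_Ico] at hi
      omega
    · intro k hk
      simp only [Finset.mem_Ico] at hk
      omega
    · intro i hi
      simp only [Finset.mem_Ico] at hi
      have hij : j = (j - i) + i := by omega
      rw [hg]
      rw [div_eq_div_iff (by positivity) (ne_of_gt (hden (j - i)))]
      calc q ^ j * (q ^ (j - i) + 1) = q ^ ((j-i)+i) * (q ^ (j - i) + 1) := by rw [← hij]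
        _ = q ^ (j - i) * (q ^ ((j-i)+i) + q ^ i) := by rw [pow_add]; ring
        _ = q ^ (j - i) * (q ^ j + q ^ i) := by rw [← hij]
  -- closed form with `Icc 1 n` (top term vanishes)
  have trunc : ∀ n : ℕ, (∑ k ∈ Finset.Icc 1 n, ((n:ℝ) - k) * g k)
      = ∑ k ∈ Finset.Icc 1 (n-1), ((n:ℝ) - k) * g k := by
    intro n
    rcases Nat.eq_zero_or_pos n with h | h
    · subst h; simp
    · have hins : Finset.Icc 1 n = insert n (Finset.Icc 1 (n-1)) := by
        ext x; simp only [Finset.mem_Icc, Finset.mem_insert]; omega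
      rw [hins, Finset.sum_insert (by simp only [Finset.mem_Icc]; omega)]
      simp
  have keyC : ∀ n : ℕ, expInv q n = ∑ k ∈ Finset.Icc 1 n, ((n:ℝ) - k) * g k := by
    intro n
    induction n with
    | zero => simp [expInv]
    | succ n ih =>
      have hstep : expInv q (n+1) = expInv q n + ∑ k ∈ Finset.Icc 1 n, g k := by
        unfold expInv
        rw [Finset.sum_Icc_succ_top (by omega)]
        rw [inner (n+1), Finset.Ico_add_one_right_eq_Icc]
      rw [hstep, ih]
      rw [Finset.sum_Icc_succ_top (by omega : 1 ≤ n + 1)]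
      rw [← Finset.sum_add_distrib]
      push_cast
      rw [show ((n:ℝ) + 1 - (n + 1)) * g (n+1) = 0 by ring]
      rw [add_zero]
      exact Finset.sum_congr rfl (fun k _ => by ring)
  have key1 : ∀ n : ℕ, expInv q n =
      ∑ k ∈ Finset.Icc 1 (n - 1), ((n : ℝ) - k) / (1 + q ^ (-(k : ℤ))) := by
    intro n
    rw [keyC n, trunc n]
    refine Finset.sum_congr rfl (fun k _ => ?_)
    rw [div_eq_mul_one_div, hfg k]
  -- summability
  have hcast : ∀ k : ℕ, (1:ℝ) / (1 + q ^ (-(k + 1 : ℤ))) = g (k+1) := by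
    intro k
    have : (-(k + 1 : ℤ)) = -(((k+1 : ℕ)):ℤ) := by push_cast; ring
    rw [this, hfg (k+1)]
  have hgnn : ∀ k : ℕ, 0 ≤ g k := fun k => le_of_lt (by positivity)
  have hgle : ∀ k : ℕ, g k ≤ q ^ k := by
    intro k
    rw [hg]
    calc q ^ k / (q ^ k + 1) ≤ q ^ k / 1 :=
      div_le_div_of_nonneg_left (le_of_lt (hqk k)) one_pos (by linarith [hqk k])
      _ = q ^ k := div_one _
  have hgeo : Summable (fun k : ℕ => q ^ k) := summable_geometric_of_lt_one hq0.le hq1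
  have ha : Summable (fun k : ℕ => g (k+1)) := by
    refine Summable.of_nonneg_of_le (fun k => hgnn _) (fun k => hgle _) ?_
    simpa [pow_succ] using hgeo.mul_right q
  have hsum2 : Summable fun k : ℕ => 1 / (1 + q ^ (-(k + 1 : ℤ))) := by
    exact ha.congr (fun k => (hcast k).symm)
  refine ⟨key1, hsum2, ?_⟩
  -- limit
  have htsum : (∑' k : ℕ, 1 / (1 + q ^ (-(k + 1 : ℤ)))) = ∑' k : ℕ, g (k+1) :=
    tsum_congr hcast
  rw [htsum]
  set S : ℝ := ∑' k : ℕ, g (k+1) with hS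
  set A : ℕ → ℝ := fun m => ∑ i ∈ Finset.range m, g (i+1) with hA
  set b : ℕ → ℝ := fun i => ((i:ℝ) + 1) * g (i+1) with hb
  have hbnn : ∀ i, 0 ≤ b i := fun i => mul_nonneg (by positivity) (hgnn _)
  have hbsum : Summable b := by
    have h1 : Summable (fun i : ℕ => (i:ℝ) * q ^ i) := by
      simpa using summable_pow_mul_geometric_of_norm_lt_one 1
        (by rw [Real.norm_eq_abs, abs_of_pos hq0]; exact hq1)
    have h2 : Summable (fun i : ℕ => ((i:ℝ) + 1) * q ^ (i+1)) := by
      refine ((h1.add hgeo).mul_left q).congr (fun i => ?_)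
      rw [pow_succ]
      ring
    refine Summable.of_nonneg_of_le hbnn (fun i => ?_) h2
    exact mul_le_mul_of_nonneg_left (hgle (i+1)) (by positivity)
  set T : ℝ := ∑' i, b i with hT
  set B : ℕ → ℝ := fun m => ∑ i ∈ Finset.range m, b i with hB
  have hBle : ∀ m, B m ≤ T := fun m =>
    Summable.sum_le_tsum (Finset.range m) (fun i _ => hbnn i) hbsum
  have hBnn : ∀ m, 0 ≤ B m := fun m => Finset.sum_nonneg (fun i _ => hbnn i)
  -- expInv q n = n * A (n-1) - B (n-1)
  have keyE : ∀ n : ℕ, expInv q n = (n:ℝ) * A (n-1) - B (n-1) := by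
    intro n
    rw [keyC n, trunc n]
    have : Finset.Icc 1 (n-1) = Finset.Ico 1 ((n-1)+1) := (Finset.Ico_add_one_right_eq_Icc _ _).symm
    rw [this, Finset.sum_Ico_eq_sum_range]
    simp only [Nat.add_sub_cancel]
    rw [hA, hB, Finset.mul_sum, ← Finset.sum_sub_distrib]
    refine Finset.sum_congr rfl (fun i _ => ?_)
    rw [hb]
    push_cast
    ring_nf
  have hAtend : Tendsto (fun n : ℕ => A (n-1)) atTop (nhds S) :=
    (ha.hasSum.tendsto_sum_nat).comp (tendsto_sub_atTop_nat 1)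
  have hBtend : Tendsto (fun n : ℕ => B (n-1) / n) atTop (nhds 0) := by
    refine squeeze_zero (fun n => div_nonneg (hBnn _) (Nat.cast_nonneg n))
      (fun n => ?_) (tendsto_const_div_atTop_nhds_zero_nat T)
    rcases Nat.eq_zero_or_pos n with h | h
    · subst h; simp
    · exact div_le_div_of_nonneg_right (hBle _) (Nat.cast_nonneg n)
  have : Tendsto (fun n : ℕ => A (n-1) - B (n-1) / n) atTop (nhds (S - 0)) :=
    hAtend.sub hBtend
  rw [sub_zero] at this
  refine this.congr' ?_
  filter_upwards [eventually_ge_atTop 1] with n hn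
  rw [keyE n]
  have hn0 : (n:ℝ) ≠ 0 := by positivity
  field_simp
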